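/- For every natural number N, every real number k, and every real x with −1 ≤ x ≤ 1, the Fourier–Legendre series of J_N(k·) converges to the function value: ∑_{L=0}^∞ a_{LN}(k) · P_L(x) = J_N(kx), where a_{LN}(k) = ((2L+1)/2) ∫_{−1}^{1} J_N(kt) P_L(t) dt. -/

import Mathlib

open Real

open Polynomial

noncomputable def Ipoly (p : ℝ[X]) : ℝ := ∫ t in (-1:ℝ)..1, p.eval t

lemma Ipoly_intble (p : ℝ[X]) : IntervalIntegrable (fun t => p.eval t) MeasureTheory.volume (-1:ℝ) 1 :=
  (p.continuous_aeval).intervalIntegrable _ _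

lemma Ipoly_deriv (p : ℝ[X]) : Ipoly (derivative p) = p.eval 1 - p.eval (-1) := by
  unfold Ipoly
  exact intervalIntegral.integral_eq_sub_of_hasDerivAt (fun x _ => p.hasDerivAt x)
    (Ipoly_intble _)

lemma Ipoly_add (p q : ℝ[X]) : Ipoly (p + q) = Ipoly p + Ipoly q := by
  unfold Ipoly
  simp only [eval_add]
  exact intervalIntegral.integral_add (Ipoly_intble p) (Ipoly_intble q)

lemma Ipoly_smul (a : ℝ) (p : ℝ[X]) : Ipoly (C a * p) = a * Ipoly p := by
  unfold Ipoly
  simp only [eval_mul, eval_C]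
  exact intervalIntegral.integral_const_mul a _

lemma Ipoly_ibp (p q : ℝ[X]) :
    Ipoly (p * derivative q) =
      (p * q).eval 1 - (p * q).eval (-1) - Ipoly (derivative p * q) := by
  have h := Ipoly_deriv (p * q)
  rw [derivative_mul, Ipoly_add] at h
  linarith

/-- The Rodrigues kernel. -/
noncomputable def RK (L : ℕ) : ℝ[X] := (X ^ 2 - 1) ^ L

lemma factor_iter (a : ℝ) (s : ℝ[X]) (L : ℕ) :
    ∀ j, j ≤ L → ∃ q : ℝ[X],
      derivative^[j] ((X - C a) ^ L * s) = (X - C a) ^ (L - j) * q ∧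
      q.eval a = (L.descFactorial j : ℝ) * s.eval a := by
  intro j
  induction j with
  | zero => intro _; exact ⟨s, by simp⟩
  | succ j ih =>
    intro hj
    obtain ⟨q, hq, hqe⟩ := ih (Nat.le_of_succ_le hj)
    have hLj : L - j = (L - (j+1)) + 1 := by omega
    refine ⟨C ((L - j : ℕ) : ℝ) * q + (X - C a) * derivative q, ?_, ?_⟩
    · rw [Function.iterate_succ_apply', hq, hLj, derivative_mul, derivative_pow]
      have : (X - C a : ℝ[X]).derivative = 1 := by simp
      rw [this]
      ring_nf
      rw [Nat.add_sub_cancel_left]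
    · have : L.descFactorial (j+1) = (L - j) * L.descFactorial j := Nat.descFactorial_succ L j
      simp only [eval_add, eval_mul, eval_C, eval_sub, eval_X, sub_self, zero_mul, add_zero]
      rw [this, hqe, Nat.cast_mul]
      ring

lemma RK_eq_one (L : ℕ) : RK L = (X - C (1:ℝ)) ^ L * (X + C 1) ^ L := by
  rw [RK, ← mul_pow]; congr 1; simp only [map_one]; ring

lemma RK_eq_negone (L : ℕ) : RK L = (X - C (-1:ℝ)) ^ L * (X - C 1) ^ L := by
  rw [RK, ← mul_pow]; congr 1; simp only [map_neg, map_one]; ring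

lemma RK_boundary {L j : ℕ} (hj : j < L) :
    (derivative^[j] (RK L)).eval 1 = 0 ∧ (derivative^[j] (RK L)).eval (-1) = 0 := by
  constructor
  · obtain ⟨q, hq, -⟩ := factor_iter 1 ((X + C 1) ^ L) L j hj.le
    rw [RK_eq_one, hq]
    have : L - j ≠ 0 := by omega
    simp [this, zero_pow this]
  · obtain ⟨q, hq, -⟩ := factor_iter (-1) ((X - C 1) ^ L) L j hj.le
    rw [RK_eq_negone, hq]
    have : L - j ≠ 0 := by omega
    simp [this, zero_pow this]

lemma RK_eval_one (L : ℕ) : (derivative^[L] (RK L)).eval 1 = (L.factorial : ℝ) * 2 ^ L := by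
  obtain ⟨q, hq, hqe⟩ := factor_iter 1 ((X + C 1) ^ L) L L le_rfl
  rw [RK_eq_one, hq]
  simp only [Nat.sub_self, pow_zero, one_mul]
  rw [hqe, Nat.descFactorial_self]
  norm_num [eval_pow]

/-- Iterated integration by parts against the Rodrigues kernel. -/
lemma Ipoly_iter (L : ℕ) (Q : ℝ[X]) :
    ∀ j, j ≤ L → Ipoly (Q * derivative^[L] (RK L)) =
      (-1:ℝ) ^ j * Ipoly (derivative^[j] Q * derivative^[L-j] (RK L)) := by
  intro j
  induction j with
  | zero => intro _; simp
  | succ j ih =>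
    intro hj
    rw [ih (Nat.le_of_succ_le hj)]
    have hLj : L - j = (L - (j+1)) + 1 := by omega
    have hsucc : derivative^[L - j] (RK L) = derivative (derivative^[L - (j+1)] (RK L)) := by
      rw [hLj, Function.iterate_succ_apply']
    rw [hsucc, Ipoly_ibp]
    have hb := RK_boundary (show L - (j+1) < L by omega)
    rw [eval_mul, eval_mul, hb.1, hb.2, ← Function.iterate_succ_apply' derivative]
    ring

/-- Bessel function of the first kind of integer order `N`, defined by its
everywhere-convergent power series. -/
noncomputable def besselJ (N : ℕ) (x : ℝ) : ℝ :=
  ∑' m : ℕ, (-1 : ℝ) ^ m * (x / 2) ^ (2 * m + N) /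
    ((m.factorial : ℝ) * ((m + N).factorial : ℝ))

/-- Legendre polynomial of degree `L` via Rodrigues' formula. -/
noncomputable def legendreP (L : ℕ) : Polynomial ℝ :=
  Polynomial.C (1 / ((2 : ℝ) ^ L * (L.factorial : ℝ))) *
    (⇑Polynomial.derivative)^[L] ((Polynomial.X ^ 2 - 1) ^ L)

/-- The Fourier–Legendre coefficient `a_{LN}(k)` of `J_N(k·)`. -/
noncomputable def fourierLegendreCoeffJ (L N : ℕ) (k : ℝ) : ℝ :=
  ((2 * (L : ℝ) + 1) / 2) * ∫ t in (-1:ℝ)..1, besselJ N (k * t) * (legendreP L).eval t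

lemma legendreP_eq (L : ℕ) :
    legendreP L = C (1 / ((2:ℝ)^L * (L.factorial : ℝ))) * derivative^[L] (RK L) := rfl

lemma Ipoly_zero : Ipoly 0 = 0 := by simp [Ipoly]

lemma Ipoly_sub (p q : ℝ[X]) : Ipoly (p - q) = Ipoly p - Ipoly q := by
  have := Ipoly_add (p - q) q
  simp at this; linarith

lemma RK_natDegree (L : ℕ) : (RK L).natDegree = 2 * L := by
  rw [RK]
  have h1 : (X ^ 2 - 1 : ℝ[X]) = X ^ 2 - C 1 := by simp
  rw [natDegree_pow, h1, natDegree_X_pow_sub_C]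
  ring

lemma RK_monic (L : ℕ) : (RK L).Monic := by
  have h1 : (X ^ 2 - 1 : ℝ[X]) = X ^ 2 - C 1 := by simp
  rw [RK, h1]
  exact (monic_X_pow_sub_C (1:ℝ) (by norm_num)).pow _

lemma legendreP_natDegree_le (L : ℕ) : (legendreP L).natDegree ≤ L := by
  rw [legendreP_eq]
  refine (natDegree_C_mul_le _ _).trans ?_
  refine (natDegree_iterate_derivative _ _).trans ?_
  rw [RK_natDegree]; omega

lemma legendreP_eval_one (L : ℕ) : (legendreP L).eval 1 = 1 := by
  rw [legendreP_eq, eval_mul, eval_C, RK_eval_one]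
  have h1 : (L.factorial : ℝ) ≠ 0 := Nat.cast_ne_zero.mpr L.factorial_ne_zero
  have h2 : (2:ℝ)^L ≠ 0 := by positivity
  field_simp

lemma Ipoly_orth {Q : ℝ[X]} {L : ℕ} (h : Q.natDegree < L) :
    Ipoly (Q * derivative^[L] (RK L)) = 0 := by
  rw [Ipoly_iter L Q L le_rfl, Polynomial.iterate_derivative_eq_zero h, zero_mul,
    Ipoly_zero, mul_zero]

lemma Ipoly_mul_legendreP (Q : ℝ[X]) (L : ℕ) :
    Ipoly (Q * legendreP L) =
      (1 / ((2:ℝ)^L * (L.factorial : ℝ))) * Ipoly (Q * derivative^[L] (RK L)) := by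
  rw [legendreP_eq, ← Ipoly_smul]
  ring_nf

lemma Ipoly_orth_legendreP {Q : ℝ[X]} {L : ℕ} (h : Q.natDegree < L) :
    Ipoly (Q * legendreP L) = 0 := by
  rw [Ipoly_mul_legendreP, Ipoly_orth h, mul_zero]

noncomputable def Wint (L : ℕ) : ℝ := Ipoly ((1 - X ^ 2) ^ L)

lemma Wint_zero : Wint 0 = 2 := by
  simp only [Wint, pow_zero, Ipoly]
  norm_num

lemma Wint_succ (L : ℕ) :
    (2*(L:ℝ)+3) * Wint (L+1) = (2*(L:ℝ)+2) * Wint L := by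
  have key : derivative (X * (1 - X^2)^(L+1)) =
      C (2*(L:ℝ)+3) * (1-X^2)^(L+1) - C (2*(L:ℝ)+2) * (1-X^2)^L := by
    rw [derivative_mul, derivative_pow]
    simp only [derivative_X, derivative_one, derivative_sub, derivative_pow, derivative_X,
      mul_one, one_mul, zero_sub, Nat.cast_add, Nat.cast_one, Nat.add_sub_cancel]
    push_cast
    rw [pow_succ (1 - X^2 : ℝ[X]) L]
    ring_nf
    simp only [map_add, map_mul, map_ofNat, map_one, map_natCast]
    ring
  have hI := Ipoly_deriv (X * (1 - X^2)^(L+1))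
  rw [key] at hI
  rw [Ipoly_sub, Ipoly_smul, Ipoly_smul] at hI
  have e1 : (X * (1 - X^2)^(L+1) : ℝ[X]).eval 1 = 0 := by simp
  have e2 : (X * (1 - X^2)^(L+1) : ℝ[X]).eval (-1) = 0 := by simp
  rw [e1, e2] at hI
  unfold Wint
  linarith

lemma Wint_eq (L : ℕ) :
    Wint L = 2 * 4^L * ((L.factorial : ℝ))^2 / ((2*L+1).factorial : ℝ) := by
  induction L with
  | zero => simp [Wint_zero]
  | succ L ih =>
    have h := Wint_succ L
    rw [ih] at h
    have h3 : (2*(L:ℝ)+3) ≠ 0 := by positivity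
    have hf : ((2*(L+1)+1).factorial : ℝ) = (2*(L:ℝ)+3) * ((2*(L:ℝ)+2)) * ((2*L+1).factorial : ℝ) := by
      have : 2*(L+1)+1 = (2*L+1) + 1 + 1 := by ring
      rw [this, Nat.factorial_succ, Nat.factorial_succ]
      push_cast
      ring
    have hf2 : ((L+1).factorial : ℝ) = ((L:ℝ)+1) * (L.factorial : ℝ) := by
      rw [Nat.factorial_succ]; push_cast; ring
    have hfpos : ((2*L+1).factorial : ℝ) ≠ 0 := Nat.cast_ne_zero.mpr (Nat.factorial_ne_zero _)
    have hW : Wint (L+1) = (2*(L:ℝ)+2) * (2 * 4^L * ((L.factorial:ℝ))^2 / ((2*L+1).factorial:ℝ)) / (2*(L:ℝ)+3) := by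
      rw [eq_div_iff h3]
      linarith [h]
    rw [hW, hf, hf2]
    field_simp
    ring

lemma RK_coeff_top (L : ℕ) : (RK L).coeff (2*L) = 1 := by
  have := (RK_monic L).coeff_natDegree
  rwa [RK_natDegree] at this

lemma iterate2L (L : ℕ) : derivative^[2*L] (RK L) = C (((2*L).factorial : ℝ)) := by
  have hd : (derivative^[2*L] (RK L)).natDegree ≤ 0 := by
    refine (natDegree_iterate_derivative _ _).trans ?_
    rw [RK_natDegree]; omega
  rw [Polynomial.eq_C_of_natDegree_le_zero hd, coeff_iterate_derivative]
  simp [RK_coeff_top, Nat.descFactorial_self]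

lemma iterate_derivative_legendreP (L : ℕ) :
    derivative^[L] (legendreP L) =
      C ((1/((2:ℝ)^L * (L.factorial : ℝ))) * (((2*L).factorial : ℝ))) := by
  rw [legendreP_eq, Polynomial.iterate_derivative_C_mul,
    ← Function.iterate_add_apply]
  have : L + L = 2 * L := by ring
  rw [this, iterate2L, ← C_mul]

lemma Ipoly_RK (L : ℕ) : Ipoly (RK L) = (-1:ℝ)^L * Wint L := by
  have h : ((1 - X^2 : ℝ[X]))^L = C ((-1:ℝ)^L) * RK L := by
    rw [RK, map_pow, map_neg, map_one,
      show ((1:ℝ[X]) - X^2) = -(X^2 - 1) by ring, neg_pow]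
  have hW : Wint L = (-1:ℝ)^L * Ipoly (RK L) := by
    rw [Wint, h, Ipoly_smul]
  have hsq : (-1:ℝ)^L * (-1:ℝ)^L = 1 := by
    rw [← pow_add, ← two_mul, pow_mul]; norm_num
  rw [hW, ← mul_assoc, hsq, one_mul]

lemma Ipoly_legendreP_sq (L : ℕ) :
    Ipoly (legendreP L * legendreP L) = 2 / (2*(L:ℝ)+1) := by
  rw [Ipoly_mul_legendreP, Ipoly_iter L (legendreP L) L le_rfl]
  simp only [Nat.sub_self, Function.iterate_zero_apply]
  rw [iterate_derivative_legendreP, Ipoly_smul, Ipoly_RK, Wint_eq]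
  have h1 : ((2*L+1).factorial : ℝ) = (2*(L:ℝ)+1) * ((2*L).factorial : ℝ) := by
    rw [Nat.factorial_succ]; push_cast; ring
  have h2 : ((2*L).factorial : ℝ) ≠ 0 := Nat.cast_ne_zero.mpr (Nat.factorial_ne_zero _)
  have h3 : (L.factorial : ℝ) ≠ 0 := Nat.cast_ne_zero.mpr (Nat.factorial_ne_zero _)
  have h4 : (2:ℝ)^L ≠ 0 := by positivity
  have h5 : (2*(L:ℝ)+1) ≠ 0 := by positivity
  have h6 : ((-1:ℝ)^L)^2 = 1 := by
    rw [← pow_mul, mul_comm, pow_mul]; norm_num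
  have h7 : (4:ℝ)^L = ((2:ℝ)^L)^2 := by
    rw [← pow_mul, mul_comm, pow_mul]; norm_num
  have h8 : ((-1:ℝ))^(L*2) = 1 := by rw [mul_comm, pow_mul]; norm_num
  rw [h1, h7]
  field_simp
  ring_nf
  rw [h8]

lemma Ipoly_legendreP_mul {M L : ℕ} (h : M ≠ L) :
    Ipoly (legendreP M * legendreP L) = 0 := by
  rcases lt_or_gt_of_ne h with h' | h'
  · exact Ipoly_orth_legendreP (lt_of_le_of_lt (legendreP_natDegree_le M) h')
  · rw [mul_comm]
    exact Ipoly_orth_legendreP (lt_of_le_of_lt (legendreP_natDegree_le L) h')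

lemma legendreP_zero : legendreP 0 = 1 := by
  rw [legendreP_eq]
  simp [RK]

lemma legendreP_coeff_top (L : ℕ) :
    (legendreP L).coeff L = (1/((2:ℝ)^L * (L.factorial:ℝ))) * (((2*L).descFactorial L : ℕ) : ℝ) := by
  rw [legendreP_eq, coeff_C_mul, coeff_iterate_derivative,
    show L + L = 2*L from by ring, RK_coeff_top]
  simp

lemma legendreP_coeff_top_ne (L : ℕ) : (legendreP L).coeff L ≠ 0 := by
  rw [legendreP_coeff_top]
  have h1 : (0:ℝ) < ((2*L).descFactorial L : ℝ) := by
    have h0 : (2*L).descFactorial L ≠ 0 := by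
      rw [Ne, Nat.descFactorial_eq_zero_iff_lt]; omega
    have h0' : 0 < (2*L).descFactorial L := Nat.pos_of_ne_zero h0
    exact_mod_cast h0'
  have h2 : (0:ℝ) < 1/((2:ℝ)^L * (L.factorial:ℝ)) := by
    have : (0:ℝ) < (L.factorial : ℝ) := by exact_mod_cast L.factorial_pos
    positivity
  positivity

lemma mem_span_legendre : ∀ (n : ℕ) (p : ℝ[X]), p.natDegree ≤ n →
    ∃ u : ℕ → ℝ, p = ∑ i ∈ Finset.range (n+1), C (u i) * legendreP i := by
  intro n
  induction n with
  | zero =>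
    intro p hp
    refine ⟨fun _ => p.coeff 0, ?_⟩
    rw [Polynomial.eq_C_of_natDegree_le_zero hp]
    simp [legendreP_zero]
  | succ n ih =>
    intro p hp
    set a := p.coeff (n+1) / (legendreP (n+1)).coeff (n+1) with ha
    set q := p - C a * legendreP (n+1) with hqdef
    have hq1 : q.coeff (n+1) = 0 := by
      rw [hqdef]
      simp only [coeff_sub, coeff_C_mul]
      rw [ha, div_mul_cancel₀ _ (legendreP_coeff_top_ne (n+1))]
      ring
    have hq2 : q.natDegree ≤ n := by
      rw [Polynomial.natDegree_le_iff_coeff_eq_zero]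
      intro m hm
      rcases Nat.lt_or_ge (n+1) m with h' | h'
      · have hqd : q.natDegree ≤ n + 1 := by
          refine (natDegree_sub_le _ _).trans ?_
          simp only [max_le_iff]
          exact ⟨hp, (natDegree_C_mul_le _ _).trans (legendreP_natDegree_le _)⟩
        exact coeff_eq_zero_of_natDegree_lt (lt_of_le_of_lt hqd h')
      · have : m = n + 1 := by omega
        rw [this]; exact hq1
    obtain ⟨u, hu⟩ := ih q hq2
    refine ⟨fun i => if i = n+1 then a else u i, ?_⟩
    rw [Finset.sum_range_succ]
    simp only [eq_self_iff_true, if_true]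
    have hsum : ∑ i ∈ Finset.range (n+1), C (if i = n+1 then a else u i) * legendreP i
        = ∑ i ∈ Finset.range (n+1), C (u i) * legendreP i := by
      refine Finset.sum_congr rfl fun i hi => ?_
      rw [if_neg (by simp at hi; omega)]
    rw [hsum, ← hu, hqdef]
    rw [sub_add_cancel]

lemma Ipoly_sum {ι : Type*} (s : Finset ι) (f : ι → ℝ[X]) :
    Ipoly (∑ i ∈ s, f i) = ∑ i ∈ s, Ipoly (f i) := by
  classical
  induction s using Finset.induction_on with
  | empty => simp [Ipoly_zero]
  | insert _ _ h ih => rw [Finset.sum_insert h, Finset.sum_insert h, Ipoly_add, ih]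

noncomputable def bcoef (n L : ℕ) : ℝ := (2*(L:ℝ)+1)/2 * Ipoly (X^n * legendreP L)

lemma bcoef_eq_zero {n L : ℕ} (h : n < L) : bcoef n L = 0 := by
  have : (X^n : ℝ[X]).natDegree < L := by rwa [natDegree_X_pow]
  rw [bcoef, Ipoly_orth_legendreP this, mul_zero]

lemma monomial_expand (n : ℕ) (x : ℝ) :
    x^n = ∑ L ∈ Finset.range (n+1), bcoef n L * (legendreP L).eval x := by
  obtain ⟨u, hu⟩ := mem_span_legendre n (X^n : ℝ[X]) (by rw [natDegree_X_pow])
  have hb : ∀ L, L ≤ n → bcoef n L = u L := by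
    intro L hL
    rw [bcoef, hu, Finset.sum_mul, Ipoly_sum]
    have hterm : ∀ i ∈ Finset.range (n+1),
        Ipoly (C (u i) * legendreP i * legendreP L)
          = if i = L then u L * (2/(2*(L:ℝ)+1)) else 0 := by
      intro i hi
      rw [mul_assoc, Ipoly_smul]
      rcases eq_or_ne i L with rfl | hne
      · rw [if_pos rfl, Ipoly_legendreP_sq]
      · rw [if_neg hne, Ipoly_legendreP_mul hne, mul_zero]
    rw [Finset.sum_congr rfl hterm, Finset.sum_ite_eq' _ L, if_pos (by simp; omega)]
    have : (2*(L:ℝ)+1) ≠ 0 := by positivity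
    field_simp
  have := congrArg (Polynomial.eval x) hu
  rw [eval_pow, eval_X] at this
  rw [this, Polynomial.eval_finset_sum]
  refine Finset.sum_congr rfl fun L hL => ?_
  rw [eval_mul, eval_C, hb L (by simp at hL; omega)]

lemma bcoef_sum_one (n : ℕ) :
    ∑ L ∈ Finset.range (n+1), bcoef n L = 1 := by
  have := monomial_expand n 1
  simp only [legendreP_eval_one, mul_one, one_pow] at this
  linarith [this]

lemma Ipoly_even_nonneg (m L : ℕ) : 0 ≤ Ipoly (X^m * (1 - X^2)^L) := by
  unfold Ipoly
  have hint : ∀ a b : ℝ, IntervalIntegrable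
      (fun t => ((X^m * (1 - X^2)^L : ℝ[X])).eval t) MeasureTheory.volume a b :=
    fun a b => (Polynomial.continuous_aeval _).intervalIntegrable a b
  have hsplit : (∫ t in (-1:ℝ)..1, ((X^m * (1 - X^2)^L : ℝ[X])).eval t)
      = (∫ t in (-1:ℝ)..0, ((X^m * (1 - X^2)^L : ℝ[X])).eval t)
        + ∫ t in (0:ℝ)..1, ((X^m * (1 - X^2)^L : ℝ[X])).eval t := by
    rw [intervalIntegral.integral_add_adjacent_intervals (hint _ _) (hint _ _)]
  have hneg : (∫ t in (-1:ℝ)..0, ((X^m * (1 - X^2)^L : ℝ[X])).eval t)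
      = ∫ t in (0:ℝ)..1, ((X^m * (1 - X^2)^L : ℝ[X])).eval (-t) := by
    rw [intervalIntegral.integral_comp_neg (fun t => ((X^m * (1 - X^2)^L : ℝ[X])).eval t)]
    norm_num
  rw [hsplit, hneg, ← intervalIntegral.integral_add ((by
      exact ((Polynomial.continuous_aeval _).comp continuous_neg).intervalIntegrable 0 1))
      (hint 0 1)]
  refine intervalIntegral.integral_nonneg (by norm_num) ?_
  intro t ht
  obtain ⟨ht0, ht1⟩ := ht
  simp only [eval_mul, eval_pow, eval_sub, eval_one, eval_X]
  have h1 : (0:ℝ) ≤ (1 - t^2)^L := by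
    exact pow_nonneg (by nlinarith) L
  have h2 : (1 - (-t)^2)^L = (1 - t^2)^L := by rw [neg_pow]; ring_nf
  rw [h2]
  have h3 : (0:ℝ) ≤ ((-t)^m + t^m) := by
    have : |(-t)^m| = t^m := by
      rw [abs_pow, abs_neg, abs_of_nonneg ht0]
    nlinarith [neg_abs_le ((-t)^m), this]
  nlinarith [mul_nonneg h3 h1]

lemma bcoef_nonneg (n L : ℕ) : 0 ≤ bcoef n L := by
  rcases Nat.lt_or_ge n L with h | h
  · rw [bcoef_eq_zero h]
  · rw [bcoef, Ipoly_mul_legendreP, Ipoly_iter L (X^n) L le_rfl]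
    simp only [Nat.sub_self, Function.iterate_zero_apply]
    rw [Polynomial.iterate_derivative_X_pow_eq_smul]
    have hre : ((Nat.descFactorial n L : ℝ) • X ^ (n - L)) * RK L
        = C ((Nat.descFactorial n L : ℝ)) * (X ^ (n-L) * RK L) := by
      rw [smul_eq_C_mul]; ring
    rw [hre, Ipoly_smul]
    have hrk : (-1:ℝ)^L * Ipoly (X ^ (n-L) * RK L) = Ipoly (X^(n-L) * (1 - X^2)^L) := by
      have h : (X^(n-L) * (1 - X^2)^L : ℝ[X]) = C ((-1:ℝ)^L) * (X^(n-L) * RK L) := by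
        rw [RK, map_pow, map_neg, map_one,
          show ((1:ℝ[X]) - X^2) = -(X^2 - 1) by ring, neg_pow]
        ring
      rw [h, Ipoly_smul]
    have key := Ipoly_even_nonneg (n-L) L
    rw [← hrk] at key
    have hc : (0:ℝ) < 1/((2:ℝ)^L * (L.factorial:ℝ)) := by
      have : (0:ℝ) < (L.factorial : ℝ) := by exact_mod_cast L.factorial_pos
      positivity
    have hdf : (0:ℝ) ≤ (Nat.descFactorial n L : ℝ) := by positivity
    have h2L : (0:ℝ) < (2*(L:ℝ)+1)/2 := by positivity
    have hgood : 0 ≤ (-1:ℝ)^L * ((Nat.descFactorial n L : ℝ) * Ipoly (X ^ (n - L) * RK L)) := by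
      rw [mul_left_comm]
      exact mul_nonneg hdf key
    exact mul_nonneg h2L.le (mul_nonneg hc.le hgood)

lemma RK_coeff_abs_le (L j : ℕ) : |(RK L).coeff j| ≤ 2^L := by
  have hexp : RK L = ∑ i ∈ Finset.range (L+1),
      (-1:ℝ[X])^(i+L) * (X^2)^i * 1^(L-i) * (L.choose i : ℝ[X]) := by
    rw [RK, sub_pow]
  rw [hexp, Polynomial.finset_sum_coeff]
  refine (Finset.abs_sum_le_sum_abs _ _).trans ?_
  have hterm : ∀ i ∈ Finset.range (L+1),
      |((-1:ℝ[X])^(i+L) * (X^2)^i * 1^(L-i) * (L.choose i : ℝ[X])).coeff j|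
        ≤ (L.choose i : ℝ) := by
    intro i _
    have : ((-1:ℝ[X])^(i+L) * (X^2)^i * 1^(L-i) * (L.choose i : ℝ[X]))
        = C ((-1:ℝ)^(i+L) * (L.choose i : ℝ)) * X^(2*i) := by
      push_cast
      rw [map_mul, map_pow, map_neg, map_one, map_natCast]
      rw [← pow_mul]
      ring
    rw [this, coeff_C_mul, coeff_X_pow]
    rcases eq_or_ne j (2*i) with rfl | hne
    · rw [if_pos rfl]
      rw [abs_mul, abs_mul, abs_pow, abs_neg, abs_one, one_pow, one_mul, mul_one]
      rw [abs_of_nonneg (by positivity : (0:ℝ) ≤ (L.choose i : ℝ))]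
    · rw [if_neg hne, mul_zero, abs_zero]
      positivity
  refine (Finset.sum_le_sum hterm).trans ?_
  have := Nat.sum_range_choose L
  have hcast : ∑ i ∈ Finset.range (L+1), (L.choose i : ℝ) = (2^L : ℝ) := by
    exact_mod_cast congrArg (Nat.cast : ℕ → ℝ) this
  rw [hcast]

lemma eval_abs_le {p : ℝ[X]} {d : ℕ} (hd : p.natDegree ≤ d) {x : ℝ} (hx : |x| ≤ 1) :
    |p.eval x| ≤ ∑ i ∈ Finset.range (d+1), |p.coeff i| := by
  rw [Polynomial.eval_eq_sum_range' (Nat.lt_succ_of_le hd)]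
  refine (Finset.abs_sum_le_sum_abs _ _).trans ?_
  refine Finset.sum_le_sum fun i _ => ?_
  rw [abs_mul, abs_pow]
  calc |p.coeff i| * |x|^i ≤ |p.coeff i| * 1 := by
        refine mul_le_mul_of_nonneg_left ?_ (abs_nonneg _)
        exact pow_le_one₀ (abs_nonneg x) hx
    _ = |p.coeff i| := mul_one _

lemma legendreP_coeff_abs_le (L i : ℕ) :
    |(legendreP L).coeff i| ≤ (1/((2:ℝ)^L * (L.factorial:ℝ))) * (((2*L)^L : ℕ) * 2^L) := by
  have hfac : (0:ℝ) < (L.factorial : ℝ) := by exact_mod_cast L.factorial_pos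
  have hcpos : (0:ℝ) ≤ 1/((2:ℝ)^L * (L.factorial:ℝ)) := by positivity
  rw [legendreP_eq, coeff_C_mul, abs_mul,
    abs_of_nonneg hcpos, coeff_iterate_derivative]
  refine mul_le_mul_of_nonneg_left ?_ hcpos
  rw [nsmul_eq_mul, abs_mul, Nat.abs_cast]
  rcases Nat.lt_or_ge (2*L) (i+L) with h | h
  · have : (RK L).coeff (i+L) = 0 := by
      refine coeff_eq_zero_of_natDegree_lt ?_
      rw [RK_natDegree]; omega
    rw [this, abs_zero, mul_zero]
    positivity
  · have h1 : ((i+L).descFactorial L : ℝ) ≤ (((2*L)^L : ℕ) : ℝ) := by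
      have := (Nat.descFactorial_le L h).trans (Nat.descFactorial_le_pow (2*L) L)
      exact_mod_cast this
    have h2 : |(RK L).coeff (i+L)| ≤ (2:ℝ)^L := RK_coeff_abs_le L (i+L)
    calc ((i+L).descFactorial L : ℝ) * |(RK L).coeff (i+L)|
        ≤ (((2*L)^L : ℕ) : ℝ) * (2:ℝ)^L :=
          mul_le_mul h1 h2 (abs_nonneg _) (by positivity)
      _ = _ := by norm_num

lemma two_L_pow_le (L : ℕ) : (((2*L)^L : ℕ) : ℝ) ≤ (L.factorial : ℝ) * 8^L := by
  have h1 : ((2*(L:ℝ))^L / (L.factorial : ℝ)) ≤ Real.exp (2*L) :=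
    Real.pow_div_factorial_le_exp (x := 2*(L:ℝ)) (by positivity) L
  have h2 : Real.exp (2*(L:ℝ)) ≤ 8^L := by
    rw [show (2*(L:ℝ)) = L * 2 by ring, Real.exp_nat_mul]
    refine pow_le_pow_left₀ (Real.exp_pos _).le ?_ L
    have := Real.exp_one_lt_d9
    calc Real.exp 2 = Real.exp 1 * Real.exp 1 := by
          rw [← Real.exp_add]; norm_num
      _ ≤ 2.7182818286 * 2.7182818286 := by nlinarith [Real.exp_pos 1]
      _ ≤ 8 := by norm_num
  have hfac : (0:ℝ) < (L.factorial : ℝ) := by exact_mod_cast L.factorial_pos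
  have := (div_le_iff₀ hfac).mp (h1.trans h2)
  calc (((2*L)^L : ℕ) : ℝ) = (2*(L:ℝ))^L := by push_cast; ring
    _ ≤ 8^L * (L.factorial : ℝ) := this
    _ = (L.factorial : ℝ) * 8^L := by ring

lemma legendreP_eval_bound (L : ℕ) {x : ℝ} (hx : |x| ≤ 1) :
    |(legendreP L).eval x| ≤ 2 * 16^L := by
  have hfac : (0:ℝ) < (L.factorial : ℝ) := by exact_mod_cast L.factorial_pos
  refine (eval_abs_le (legendreP_natDegree_le L) hx).trans ?_
  have hbd := legendreP_coeff_abs_le L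
  calc ∑ i ∈ Finset.range (L+1), |(legendreP L).coeff i|
      ≤ ∑ _i ∈ Finset.range (L+1),
          (1/((2:ℝ)^L * (L.factorial:ℝ))) * (((2*L)^L : ℕ) * 2^L) :=
        Finset.sum_le_sum fun i _ => hbd i
    _ = (L+1) * ((1/((2:ℝ)^L * (L.factorial:ℝ))) * (((2*L)^L : ℕ) * 2^L)) := by
        rw [Finset.sum_const, Finset.card_range]; push_cast; ring
    _ ≤ 2 * 16^L := by
        have h1 : (((2*L)^L : ℕ) : ℝ) ≤ (L.factorial : ℝ) * 8^L := two_L_pow_le L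
        have h2 : ((L:ℝ)+1) ≤ 2^L * 2 := by
          have := Nat.lt_two_pow_self (n := L+1)
          have hc : ((L:ℝ)+1) < (2:ℝ)^(L+1) := by exact_mod_cast this
          rw [pow_succ] at hc
          linarith
        have key : ((L:ℝ)+1) * ((1/((2:ℝ)^L * (L.factorial:ℝ))) * (((2*L)^L : ℕ) * 2^L))
            ≤ (2^L * 2) * ((1/((2:ℝ)^L * (L.factorial:ℝ))) * (((L.factorial : ℝ) * 8^L) * 2^L)) := by
          refine mul_le_mul h2 ?_ (by positivity) (by positivity)
          refine mul_le_mul_of_nonneg_left ?_ (by positivity)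
          refine mul_le_mul_of_nonneg_right h1 (by positivity)
        refine key.trans (le_of_eq ?_)
        rw [show (16:ℝ) = 2*8 by norm_num, mul_pow]
        field_simp

noncomputable def cJ (N : ℕ) (k : ℝ) (m : ℕ) : ℝ :=
  (-1)^m * (k/2)^(2*m+N) / ((m.factorial : ℝ) * ((m+N).factorial : ℝ))

lemma besselJ_eq (N : ℕ) (k y : ℝ) :
    besselJ N (k*y) = ∑' m, cJ N k m * y^(2*m+N) := by
  rw [besselJ]
  refine tsum_congr fun m => ?_
  rw [cJ]
  rw [show (k*y)/2 = (k/2)*y by ring, mul_pow]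
  ring

lemma cJ_abs_le (N : ℕ) (k : ℝ) (m : ℕ) :
    |cJ N k m| ≤ (|k|/2)^N * (((k^2/4)^m) / (m.factorial : ℝ)) := by
  rw [cJ, abs_div, abs_mul, abs_pow, abs_pow, abs_neg, abs_one, one_pow, one_mul]
  have h1 : |k/2| = |k|/2 := by rw [abs_div]; norm_num
  have h2 : |(m.factorial : ℝ) * ((m+N).factorial : ℝ)| = (m.factorial : ℝ) * ((m+N).factorial : ℝ) := by
    rw [abs_of_nonneg]; positivity
  rw [h1, h2]
  have h3 : (|k|/2)^(2*m+N) = (|k|/2)^N * (k^2/4)^m := by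
    rw [pow_add, pow_mul]
    have : (|k|/2)^2 = k^2/4 := by
      rw [div_pow, sq_abs]; norm_num
    rw [this]; ring
  rw [h3]
  rw [div_le_iff₀ (by positivity)]
  have hge : (1:ℝ) ≤ ((m+N).factorial : ℝ) := by
    exact_mod_cast Nat.one_le_iff_ne_zero.mpr (Nat.factorial_ne_zero _)
  have hm : (0:ℝ) < (m.factorial : ℝ) := by exact_mod_cast m.factorial_pos
  have hk : (0:ℝ) ≤ (|k|/2)^N := by positivity
  have hp : (0:ℝ) ≤ (k^2/4)^m := by positivity
  have key : (|k| / 2) ^ N * ((k ^ 2 / 4) ^ m / ↑m.factorial) * (↑m.factorial * ↑(m + N).factorial)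
      = ((|k| / 2) ^ N * (k ^ 2 / 4) ^ m) * ((m+N).factorial : ℝ) := by
    field_simp
  rw [key]
  nlinarith [mul_nonneg hk hp]

lemma summable_cJ_pow (N : ℕ) (k : ℝ) (c : ℝ) (hc : 0 < c) :
    Summable (fun m => |cJ N k m| * (2 * c^(2*m+N))) := by
  refine Summable.of_nonneg_of_le (fun m => by positivity) (fun m => ?_)
    (((Real.summable_pow_div_factorial (c^2*(k^2/4))).mul_left
      ((|k|/2)^N * (2*c^N)))) 
  have h1 := cJ_abs_le N k m
  have h2 : (2:ℝ) * c^(2*m+N) = 2 * c^N * (c^2)^m := by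
    rw [pow_add, pow_mul]; ring
  calc |cJ N k m| * (2 * c^(2*m+N))
      ≤ ((|k|/2)^N * (((k^2/4)^m) / (m.factorial : ℝ))) * (2 * c^(2*m+N)) := by
        refine mul_le_mul_of_nonneg_right h1 (by positivity)
    _ = (|k|/2)^N * (2*c^N) * ((c^2*(k^2/4))^m / (m.factorial : ℝ)) := by
        rw [h2, mul_pow]
        ring

lemma coeff_swap (L N : ℕ) (k : ℝ) :
    fourierLegendreCoeffJ L N k = ∑' m, cJ N k m * bcoef (2*m+N) L := by
  classical
  set g : ℕ → ℝ → ℝ := fun m t => cJ N k m * t^(2*m+N) * (legendreP L).eval t with hg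
  have hgc : ∀ m, Continuous (g m) := by
    intro m
    exact ((continuous_const.mul (continuous_pow _)).mul (legendreP L).continuous_aeval)
  have hInt : ∀ m, MeasureTheory.IntegrableOn (g m) (Set.Ioc (-1:ℝ) 1) :=
    fun m => (hgc m).integrableOn_Ioc
  have hmeas : (MeasureTheory.volume (Set.Ioc (-1:ℝ) 1)).toReal = 2 := by
    rw [Real.volume_Ioc]
    rw [ENNReal.toReal_ofReal (by norm_num)]
    norm_num
  have hNorm : Summable fun m => ∫ t in Set.Ioc (-1:ℝ) 1, ‖g m t‖ := by
    refine Summable.of_nonneg_of_le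
      (fun m => MeasureTheory.integral_nonneg (fun t => norm_nonneg _))
      (fun m => ?_)
      ((summable_cJ_pow N k 1 one_pos).mul_right (2 * 16^L))
    have hb : ∀ t ∈ Set.Ioc (-1:ℝ) 1, ‖g m t‖ ≤ |cJ N k m| * (2 * 16^L) := by
      intro t ht
      obtain ⟨ht0, ht1⟩ := ht
      have habs : |t| ≤ 1 := abs_le.mpr ⟨ht0.le, ht1⟩
      rw [hg]
      simp only [norm_mul, Real.norm_eq_abs]
      have h1 : |t^(2*m+N)| ≤ 1 := by
        rw [abs_pow]; exact pow_le_one₀ (abs_nonneg t) habs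
      have h2 : |(legendreP L).eval t| ≤ 2 * 16^L := legendreP_eval_bound L habs
      calc |cJ N k m| * |t^(2*m+N)| * |(legendreP L).eval t|
          ≤ |cJ N k m| * 1 * (2*16^L) := by
            refine mul_le_mul (mul_le_mul_of_nonneg_left h1 (abs_nonneg _)) h2
              (abs_nonneg _) (by positivity)
        _ = |cJ N k m| * (2*16^L) := by ring
    calc (∫ t in Set.Ioc (-1:ℝ) 1, ‖g m t‖)
        ≤ ∫ _t in Set.Ioc (-1:ℝ) 1, |cJ N k m| * (2 * 16^L) := by
          refine MeasureTheory.setIntegral_mono_on ((hInt m).norm) ?_ measurableSet_Ioc hb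
          exact MeasureTheory.integrableOn_const (by
            rw [Real.volume_Ioc]; exact ENNReal.ofReal_ne_top)
      _ = |cJ N k m| * (2 * 16^L) * 2 := by
          rw [MeasureTheory.setIntegral_const, MeasureTheory.measureReal_def, hmeas, smul_eq_mul]
          ring
      _ = |cJ N k m| * (2 * 1^(2*m+N)) * (2 * 16^L) := by ring
  have hswap := MeasureTheory.integral_tsum_of_summable_integral_norm hInt hNorm
  have hpt : ∀ t : ℝ, besselJ N (k * t) * (legendreP L).eval t = ∑' m, g m t := by
    intro t
    rw [besselJ_eq N k t, hg]
    exact (tsum_mul_right).symm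
  rw [fourierLegendreCoeffJ]
  have hint_eq : (∫ t in (-1:ℝ)..1, besselJ N (k * t) * (legendreP L).eval t)
      = ∑' m, ∫ t in Set.Ioc (-1:ℝ) 1, g m t := by
    rw [intervalIntegral.integral_of_le (by norm_num : (-1:ℝ) ≤ 1)]
    rw [hswap]
    refine MeasureTheory.setIntegral_congr_fun measurableSet_Ioc (fun t _ => hpt t)
  rw [hint_eq, ← tsum_mul_left]
  refine tsum_congr fun m => ?_
  have : (∫ t in Set.Ioc (-1:ℝ) 1, g m t)
      = cJ N k m * Ipoly (X^(2*m+N) * legendreP L) := by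
    rw [← intervalIntegral.integral_of_le (by norm_num : (-1:ℝ) ≤ 1), Ipoly,
      ← intervalIntegral.integral_const_mul]
    refine intervalIntegral.integral_congr fun t _ => ?_
    rw [hg]
    simp only [eval_mul, eval_pow, eval_X]
    ring
  rw [this, bcoef]
  ring

/-- The Fourier–Legendre series of `J_N(k·)` converges pointwise on `[-1, 1]`
to the function value: `∑_{L=0}^∞ a_{LN}(k) P_L(x) = J_N(kx)`. -/
theorem fourierLegendre_series_besselJ (N : ℕ) (k x : ℝ)
    (hx₁ : -1 ≤ x) (hx₂ : x ≤ 1) :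
    HasSum (fun L : ℕ => fourierLegendreCoeffJ L N k * (legendreP L).eval x)
      (besselJ N (k * x)) := by
  have habs : |x| ≤ 1 := abs_le.mpr ⟨hx₁, hx₂⟩
  set Fs : ℕ × ℕ → ℝ :=
    fun q => cJ N k q.1 * bcoef (2*q.1+N) q.2 * (legendreP q.2).eval x with hFs_def
  -- monomial expansion as a HasSum over L
  have hmono : ∀ m : ℕ, HasSum (fun L => Fs (m, L)) (cJ N k m * x^(2*m+N)) := by
    intro m
    have hzero : ∀ L ∉ Finset.range (2*m+N+1), Fs (m, L) = 0 := by
      intro L hL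
      simp only [Finset.mem_range] at hL
      rw [hFs_def]
      simp only
      rw [bcoef_eq_zero (by omega), mul_zero, zero_mul]
    have := hasSum_sum_of_ne_finset_zero (L := SummationFilter.unconditional ℕ) hzero
    have hsum_eq : ∑ L ∈ Finset.range (2*m+N+1), Fs (m, L) = cJ N k m * x^(2*m+N) := by
      rw [monomial_expand (2*m+N) x, Finset.mul_sum]
      refine Finset.sum_congr rfl fun L _ => ?_
      rw [hFs_def]; ring
    rwa [hsum_eq] at this
  -- summability of |Fs|
  have hG : Summable (fun q : ℕ × ℕ =>
      |cJ N k q.1| * (2*16^(2*q.1+N)) * bcoef (2*q.1+N) q.2) := by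
    rw [summable_prod_of_nonneg (fun q => by
      have := bcoef_nonneg (2*q.1+N) q.2
      positivity)]
    constructor
    · intro m
      refine (hasSum_sum_of_ne_finset_zero (s := Finset.range (2*m+N+1)) ?_).summable
      intro L hL
      simp only [Finset.mem_range] at hL
      rw [bcoef_eq_zero (by omega), mul_zero]
    · refine Summable.of_nonneg_of_le (fun m => tsum_nonneg fun L => by
        have := bcoef_nonneg (2*m+N) L
        positivity) (fun m => ?_) (summable_cJ_pow N k 16 (by norm_num))
      have hts : ∑' L, |cJ N k m| * (2*16^(2*m+N)) * bcoef (2*m+N) L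
          = |cJ N k m| * (2*16^(2*m+N)) * ∑' L, bcoef (2*m+N) L := by
        rw [tsum_mul_left]
      have hb1 : ∑' L, bcoef (2*m+N) L = 1 := by
        have hzero : ∀ L ∉ Finset.range (2*m+N+1), bcoef (2*m+N) L = 0 := by
          intro L hL
          simp only [Finset.mem_range] at hL
          exact bcoef_eq_zero (by omega)
        rw [(hasSum_sum_of_ne_finset_zero hzero).tsum_eq, bcoef_sum_one]
      rw [hts, hb1, mul_one]
  have hFsabs : Summable fun q => |Fs q| := by
    refine Summable.of_nonneg_of_le (fun q => abs_nonneg _) (fun q => ?_) hG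
    obtain ⟨m, L⟩ := q
    rw [hFs_def]
    simp only
    rcases Nat.lt_or_ge (2*m+N) L with h | h
    · rw [bcoef_eq_zero h]
      simp
    · rw [abs_mul, abs_mul, abs_of_nonneg (bcoef_nonneg _ _)]
      have h1 : |(legendreP L).eval x| ≤ 2*16^L := legendreP_eval_bound L habs
      have h2 : (2:ℝ)*16^L ≤ 2*16^(2*m+N) := by
        have : (16:ℝ)^L ≤ 16^(2*m+N) := pow_le_pow_right₀ (by norm_num) h
        linarith
      calc |cJ N k m| * bcoef (2*m+N) L * |(legendreP L).eval x|
          ≤ |cJ N k m| * bcoef (2*m+N) L * (2*16^(2*m+N)) := by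
            refine mul_le_mul_of_nonneg_left (h1.trans h2) ?_
            exact mul_nonneg (abs_nonneg _) (bcoef_nonneg _ _)
        _ = |cJ N k m| * (2*16^(2*m+N)) * bcoef (2*m+N) L := by ring
  have hFs : Summable Fs := summable_abs_iff.mp hFsabs
  -- F on (L, m)
  have hF : Summable (fun p : ℕ × ℕ => Fs (p.2, p.1)) := by
    have := (Equiv.prodComm ℕ ℕ).summable_iff (f := Fs)
    refine this.mpr hFs
  -- fibers of F over L
  have hFfiber : ∀ L, Summable (fun m => Fs (m, L)) := by
    intro L
    refine hFs.comp_injective (i := fun m => ((m, L) : ℕ × ℕ)) ?_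
    intro a b hab
    simpa using congrArg Prod.fst hab
  -- the series over L
  have hmain : HasSum (fun L => ∑' m, Fs (m, L)) (∑' p : ℕ × ℕ, Fs (p.2, p.1)) :=
    HasSum.prod_fiberwise hF.hasSum (fun L => (hFfiber L).hasSum)
  -- identify the total sum
  have htot : (∑' p : ℕ × ℕ, Fs (p.2, p.1)) = besselJ N (k * x) := by
    have he : (∑' p : ℕ × ℕ, Fs (p.2, p.1)) = ∑' q : ℕ × ℕ, Fs q := by
      exact (Equiv.prodComm ℕ ℕ).tsum_eq Fs
    rw [he, Summable.tsum_prod' hFs (fun m => (hmono m).summable)]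
    rw [besselJ_eq N k x]
    exact tsum_congr fun m => (hmono m).tsum_eq
  rw [← htot]
  have hfun : (fun L : ℕ => fourierLegendreCoeffJ L N k * (legendreP L).eval x)
      = fun L => ∑' m, Fs (m, L) := by
    funext L
    rw [coeff_swap L N k, ← tsum_mul_right]
  rw [hfun]
  exact hmain
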